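/- Let F = ⟨a⟩ be the infinite cyclic group and kF its group algebra. The linear map Δ: kF → kF ⊗ kF defined by Δ(a^{n+1}) = Σ_{i=0}^{n} a^i ⊗ a^{n−i} for n ≥ 0, Δ(e) = 0, and Δ(a^{−n}) = −Σ_{i=1}^{n} a^{−(n+1−i)} ⊗ a^{−i} for n ≥ 1, is coassociative: (Δ ⊗ id)∘Δ = (id ⊗ Δ)∘Δ. -/

import Mathlib

open scoped TensorProduct

set_option maxHeartbeats 1000000
set_option synthInstance.maxHeartbeats 400000

variable (k : Type*) [Field k]

/-- The group algebra of the infinite cyclic group, with basis `aⁿ = single n 1`, `n ∈ ℤ`. -/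
abbrev GA := AddMonoidAlgebra k ℤ

/-- The value of the coproduct on the basis element `aⁿ`:
`Δ(aⁿ) = Σ_{i=0}^{n-1} aⁱ ⊗ a^{n-1-i}` for `n > 0`, `Δ(a⁰) = 0`, and
`Δ(a⁻ᵐ) = −Σ_{i=1}^{m} a^{−(m+1−i)} ⊗ a^{−i}` for `m ≥ 1`. -/
noncomputable def Dval (n : ℤ) : GA k ⊗[k] GA k :=
  if 0 < n then
    ∑ i ∈ Finset.range n.toNat,
      AddMonoidAlgebra.single (i : ℤ) (1 : k) ⊗ₜ[k]
        AddMonoidAlgebra.single (n - 1 - (i : ℤ)) (1 : k)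
  else if n < 0 then
    -∑ i ∈ Finset.range (-n).toNat,
      AddMonoidAlgebra.single (n + (i : ℤ)) (1 : k) ⊗ₜ[k]
        AddMonoidAlgebra.single (-(i : ℤ) - 1) (1 : k)
  else 0

/-- The coproduct `Δ : kF → kF ⊗ kF`, extended linearly from the basis. -/
noncomputable def Δ : GA k →ₗ[k] GA k ⊗[k] GA k :=
  Finsupp.lift (GA k ⊗[k] GA k) k ℤ (Dval k) ∘ₗ (AddMonoidAlgebra.coeffLinearEquiv k).toLinearMap

namespace CoassocAux

open AddMonoidAlgebra Finset TensorProduct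

noncomputable local instance iCR2 : CommRing (GA k ⊗[k] GA k) := inferInstance
noncomputable local instance iA2 : Algebra k (GA k ⊗[k] GA k) := inferInstance
noncomputable local instance iCR3 : CommRing (GA k ⊗[k] (GA k ⊗[k] GA k)) := inferInstance
noncomputable local instance iCR3' : CommRing ((GA k ⊗[k] GA k) ⊗[k] GA k) := inferInstance

lemma Δ_single (n : ℤ) (c : k) : Δ k (AddMonoidAlgebra.single n c) = c • Dval k n := by
  rw [Δ, LinearMap.comp_apply, LinearEquiv.coe_coe, AddMonoidAlgebra.coeffLinearEquiv_apply,
    AddMonoidAlgebra.coeff_single]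
  erw [Finsupp.lift_apply]
  rw [Finsupp.sum_single_index]
  exact zero_smul _ _

lemma Dval_ofNat (m : ℕ) : Dval k m =
    ∑ i ∈ range m, AddMonoidAlgebra.single (i : ℤ) (1:k) ⊗ₜ[k]
      AddMonoidAlgebra.single ((m:ℤ) - 1 - i) (1:k) := by
  cases m with
  | zero => rw [Dval]; norm_num
  | succ m => rw [Dval, if_pos (by positivity)]; norm_num

lemma Dval_negNat (m : ℕ) : Dval k (-(m:ℤ)) =
    -∑ i ∈ range m, AddMonoidAlgebra.single (-(m:ℤ) + i) (1:k) ⊗ₜ[k]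
      AddMonoidAlgebra.single (-(i:ℤ) - 1) (1:k) := by
  cases m with
  | zero => rw [Dval]; norm_num
  | succ m => rw [Dval, if_neg (by omega), if_pos (by omega)]; norm_num

lemma Dval_zero : Dval k 0 = 0 := by
  rw [show (0:ℤ) = ((0:ℕ):ℤ) by norm_num, Dval_ofNat, Finset.sum_range_zero]

lemma Δ_one : Δ k 1 = 0 := by
  rw [AddMonoidAlgebra.one_def, Δ_single, Dval_zero, smul_zero]

lemma Dval_succ (n : ℤ) : Dval k (n + 1) =
    (AddMonoidAlgebra.single (1:ℤ) (1:k) ⊗ₜ[k] (1 : GA k)) * Dval k n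
      + (1 : GA k) ⊗ₜ[k] AddMonoidAlgebra.single n (1:k) := by
  rcases le_or_gt 0 n with hn | hn
  · lift n to ℕ using hn with m
    rw [show ((m:ℤ)+1) = ((m+1 : ℕ) : ℤ) by push_cast; ring, Dval_ofNat, Dval_ofNat,
      Finset.sum_range_succ']
    rw [Finset.mul_sum]
    simp only [Algebra.TensorProduct.tmul_mul_tmul, single_mul_single, one_mul, mul_one,
      AddMonoidAlgebra.one_def]
    push_cast
    congr 1
    · apply Finset.sum_congr rfl
      intro i _
      congr 1 <;> [skip; congr 1] <;> push_cast <;> ring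
    · congr 1
      ring
  · rcases eq_or_lt_of_le (by omega : n ≤ -1) with h | h
    · subst h
      rw [show (-1:ℤ) + 1 = ((0:ℕ):ℤ) by norm_num, Dval_ofNat, Finset.sum_range_zero,
        show (-1:ℤ) = -((1:ℕ):ℤ) by norm_num, Dval_negNat, Finset.sum_range_one]
      have h2 : (AddMonoidAlgebra.single (1:ℤ) (1:k) ⊗ₜ[k] (1 : GA k)) *
          (AddMonoidAlgebra.single (-((1:ℕ):ℤ) + ((0:ℕ):ℤ)) (1:k) ⊗ₜ[k]
            AddMonoidAlgebra.single (-((0:ℕ):ℤ) - 1) (1:k)) =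
          (1 : GA k) ⊗ₜ[k] AddMonoidAlgebra.single (-((1:ℕ):ℤ)) (1:k) := by
        simp only [Algebra.TensorProduct.tmul_mul_tmul, single_mul_single, one_mul, mul_one,
          AddMonoidAlgebra.one_def]
        norm_num
      linear_combination h2
    · obtain ⟨m, rfl⟩ : ∃ m : ℕ, n = -((m:ℤ)+2) := ⟨(-n-2).toNat, by omega⟩
      rw [show (-((m:ℤ)+2)+1) = -((m+1:ℕ):ℤ) by push_cast; ring,
        show (-((m:ℤ)+2)) = -((m+2:ℕ):ℤ) by push_cast; ring, Dval_negNat, Dval_negNat]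
      have hS : (AddMonoidAlgebra.single (1:ℤ) (1:k) ⊗ₜ[k] (1 : GA k)) *
          (∑ i ∈ range (m+2), AddMonoidAlgebra.single (-((m+2:ℕ):ℤ) + i) (1:k) ⊗ₜ[k]
            AddMonoidAlgebra.single (-(i:ℤ) - 1) (1:k)) =
          (∑ i ∈ range (m+1), AddMonoidAlgebra.single (-((m+1:ℕ):ℤ) + i) (1:k) ⊗ₜ[k]
            AddMonoidAlgebra.single (-(i:ℤ) - 1) (1:k))
            + (1 : GA k) ⊗ₜ[k] AddMonoidAlgebra.single (-((m+2:ℕ):ℤ)) (1:k) := by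
        rw [Finset.mul_sum, Finset.sum_range_succ]
        congr 1
        · apply Finset.sum_congr rfl
          intro i _
          simp only [Algebra.TensorProduct.tmul_mul_tmul, single_mul_single, one_mul, mul_one]
          congr 2
          push_cast; ring
        · simp only [Algebra.TensorProduct.tmul_mul_tmul, single_mul_single, one_mul, mul_one,
            AddMonoidAlgebra.one_def]
          congr 2 <;> push_cast <;> ring
      linear_combination hS

lemma Δ_a_mul (x : GA k) :
    Δ k (AddMonoidAlgebra.single (1:ℤ) (1:k) * x) =
      (AddMonoidAlgebra.single (1:ℤ) (1:k) ⊗ₜ[k] (1 : GA k)) * Δ k x + (1 : GA k) ⊗ₜ[k] x := by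
  induction x using AddMonoidAlgebra.induction_linear with
  | zero => simp only [mul_zero, map_zero, TensorProduct.tmul_zero, add_zero]
  | add f g hf hg =>
    rw [mul_add, map_add, map_add, hf, hg, TensorProduct.tmul_add]
    ring
  | single n c =>
    rw [single_mul_single, one_mul, show (1+n) = n+1 from add_comm 1 n, Δ_single, Dval_succ,
      smul_add, Δ_single]
    congr 1
    · rw [mul_smul_comm]
    · rw [← TensorProduct.tmul_smul, AddMonoidAlgebra.smul_single', mul_one]

noncomputable abbrev u3 : GA k ⊗[k] (GA k ⊗[k] GA k) :=
  AddMonoidAlgebra.single (1:ℤ) (1:k) ⊗ₜ[k] (1 : GA k ⊗[k] GA k)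

lemma aux2 (t : GA k ⊗[k] GA k) :
    TensorProduct.map LinearMap.id (Δ k)
        ((AddMonoidAlgebra.single (1:ℤ) (1:k) ⊗ₜ[k] (1 : GA k)) * t) =
      u3 k * TensorProduct.map LinearMap.id (Δ k) t := by
  induction t using TensorProduct.induction_on with
  | zero => rw [mul_zero, map_zero, mul_zero]
  | tmul p q =>
    rw [Algebra.TensorProduct.tmul_mul_tmul, one_mul, TensorProduct.map_tmul,
      TensorProduct.map_tmul, Algebra.TensorProduct.tmul_mul_tmul]
    simp only [LinearMap.id_coe, id_eq, one_mul]
  | add s t hs ht => rw [mul_add, map_add, hs, ht, map_add, mul_add]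

lemma assoc_app (x : (GA k ⊗[k] GA k) ⊗[k] GA k) :
    (TensorProduct.assoc k (GA k) (GA k) (GA k)) x =
      Algebra.TensorProduct.assoc k k k (GA k) (GA k) (GA k) x := rfl

lemma aux1 (t : GA k ⊗[k] GA k) :
    (TensorProduct.assoc k (GA k) (GA k) (GA k))
        (TensorProduct.map (Δ k) LinearMap.id
          ((AddMonoidAlgebra.single (1:ℤ) (1:k) ⊗ₜ[k] (1 : GA k)) * t)) =
      u3 k * (TensorProduct.assoc k (GA k) (GA k) (GA k))
          (TensorProduct.map (Δ k) LinearMap.id t) + (1 : GA k) ⊗ₜ[k] t := by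
  induction t using TensorProduct.induction_on with
  | zero => rw [mul_zero, map_zero, map_zero, mul_zero, TensorProduct.tmul_zero, zero_add]
  | tmul p q =>
    rw [Algebra.TensorProduct.tmul_mul_tmul, one_mul, TensorProduct.map_tmul,
      TensorProduct.map_tmul]
    simp only [LinearMap.id_coe, id_eq]
    rw [Δ_a_mul, TensorProduct.add_tmul, LinearEquiv.map_add]
    have h := Algebra.TensorProduct.tmul_mul_tmul (R := k)
      (AddMonoidAlgebra.single (1:ℤ) (1:k) ⊗ₜ[k] (1 : GA k)) (Δ k p) ((1 : GA k)) q
    rw [one_mul] at h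
    rw [← h, assoc_app, assoc_app, assoc_app, map_mul, Algebra.TensorProduct.assoc_tmul,
      Algebra.TensorProduct.assoc_tmul, ← Algebra.TensorProduct.one_def]
  | add s t hs ht =>
    rw [mul_add, map_add, map_add, hs, ht, map_add, map_add, mul_add,
      TensorProduct.tmul_add]
    ring

lemma M1_rel (x : GA k) :
    (TensorProduct.assoc k (GA k) (GA k) (GA k))
        (TensorProduct.map (Δ k) LinearMap.id
          (Δ k (AddMonoidAlgebra.single (1:ℤ) (1:k) * x))) =
      u3 k * (TensorProduct.assoc k (GA k) (GA k) (GA k))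
          (TensorProduct.map (Δ k) LinearMap.id (Δ k x)) + (1 : GA k) ⊗ₜ[k] Δ k x := by
  rw [Δ_a_mul, map_add, LinearEquiv.map_add, aux1]
  rw [TensorProduct.map_tmul, Δ_one, TensorProduct.zero_tmul, map_zero, add_zero]

lemma M2_rel (x : GA k) :
    TensorProduct.map LinearMap.id (Δ k)
        (Δ k (AddMonoidAlgebra.single (1:ℤ) (1:k) * x)) =
      u3 k * TensorProduct.map LinearMap.id (Δ k) (Δ k x) + (1 : GA k) ⊗ₜ[k] Δ k x := by
  rw [Δ_a_mul, map_add, aux2, TensorProduct.map_tmul, LinearMap.id_coe, id_eq]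

lemma isUnit_u3 : IsUnit (u3 k) := by
  have ha : IsUnit (AddMonoidAlgebra.single (1:ℤ) (1:k)) := by
    apply IsUnit.of_mul_eq_one (AddMonoidAlgebra.single (-1:ℤ) (1:k))
    rw [single_mul_single, mul_one, AddMonoidAlgebra.one_def]
    norm_num
  have h := ha.map
    (Algebra.TensorProduct.includeLeft (R := k) (S := k) (A := GA k) (B := GA k ⊗[k] GA k))
  simpa [u3] using h

lemma main (n : ℤ) :
    (TensorProduct.assoc k (GA k) (GA k) (GA k))
        (TensorProduct.map (Δ k) LinearMap.id (Δ k (AddMonoidAlgebra.single n (1:k)))) =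
      TensorProduct.map LinearMap.id (Δ k) (Δ k (AddMonoidAlgebra.single n (1:k))) := by
  induction n using Int.induction_on with
  | zero => rw [Δ_single, one_smul, Dval_zero, map_zero, map_zero, map_zero]
  | succ i ih =>
    have e : AddMonoidAlgebra.single ((i:ℤ)+1) (1:k) =
        AddMonoidAlgebra.single (1:ℤ) (1:k) * AddMonoidAlgebra.single (i:ℤ) (1:k) := by
      rw [single_mul_single, one_mul, add_comm]
    rw [e, M1_rel, M2_rel, ih]
  | pred i ih =>
    have e : AddMonoidAlgebra.single (-(i:ℤ)) (1:k) =
        AddMonoidAlgebra.single (1:ℤ) (1:k) * AddMonoidAlgebra.single (-(i:ℤ)-1) (1:k) := by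
      rw [single_mul_single, one_mul]
      congr 1
      ring
    rw [e, M1_rel, M2_rel] at ih
    have h2 := add_right_cancel ih
    exact (isUnit_u3 k).mul_left_cancel h2

end CoassocAux

/-- `Δ` is coassociative: `(Δ ⊗ id) ∘ Δ = (id ⊗ Δ) ∘ Δ`. -/
theorem cyclicGroupAlgebra_coassoc :
    (TensorProduct.assoc k (GA k) (GA k) (GA k)).toLinearMap.comp
        ((TensorProduct.map (Δ k) LinearMap.id).comp (Δ k)) =
      (TensorProduct.map LinearMap.id (Δ k)).comp (Δ k) := by
  refine AddMonoidAlgebra.lhom_ext' fun n => LinearMap.ext fun b => ?_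
  have hb : (AddMonoidAlgebra.single n b : GA k) = b • AddMonoidAlgebra.single n (1:k) := by
    rw [AddMonoidAlgebra.smul_single', mul_one]
  simp only [LinearMap.coe_comp, Function.comp_apply, LinearEquiv.coe_coe,
    AddMonoidAlgebra.lsingle_apply]
  rw [hb]
  simp only [map_smul]
  exact congrArg (b • ·) (CoassocAux.main k n)
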